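/- Let E be a real inner product space, X ⊆ E a nonempty convex set, d : E → ℝ a convex Fréchet-differentiable function with Bregman divergence V(y,x) := d(y) − d(x) − ⟨∇d(x), y − x⟩, μ > 0, L > 0, and g : E → E a μ-relatively strongly monotone operator on X with z* ∈ X a solution of the Minty variational inequality. Let (z_k)_{k≥0}, (w_k)_{k≥0} in X and positive reals (L_k)_{k≥1} with L_i ≤ 2L for all i ≥ 1 satisfy, for every k ≥ 0: (i) w_k minimizes y ↦ ⟨(1/L_{k+1})·g(z_k), y⟩ + V(y, z_k) over X; (ii) z_{k+1} minimizes u ↦ ⟨(1/L_{k+1})·g(w_k), u⟩ + V(u, z_k) + (μ/L_{k+1})·V(u, w_k) over X; (iii) ⟨g(z_k) − g(w_k), z_{k+1} − w_k⟩ ≤ L_{k+1}·( V(w_k, z_k) + V(z_{k+1}, w_k) ). Then for every R₀ > 0 with V(z*, z_0) ≤ R₀², every ε with 0 < ε < R₀², and every natural number N ≥ ((2L + μ)/μ)·log₂(R₀²/ε), one has V(z*, z_N) ≤ ε. -/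

import Mathlib

open scoped RealInnerProductSpace
open Filter Topology Set

open scoped RealInnerProductSpace
open Filter Topology Set

section helpers
variable {E : Type*} [NormedAddCommGroup E] [InnerProductSpace ℝ E] [CompleteSpace E]

lemma line_hasDerivAt {f : E → ℝ} {G x : E} (hf : HasGradientAt f G x) (v : E) :
    HasDerivAt (fun t : ℝ => f (x + t • v)) ⟪G, v⟫ 0 := by
  have hc : HasDerivAt (fun t : ℝ => x + t • v) v 0 := by
    simpa using ((hasDerivAt_id (0 : ℝ)).smul_const v).const_add x
  have hf' : HasFDerivAt f (InnerProductSpace.toDual ℝ E G) (x + (0:ℝ) • v) := by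
    simpa using (hasGradientAt_iff_hasFDerivAt.mp hf)
  have := hf'.comp_hasDerivAt (x := (0:ℝ)) hc
  simpa [Function.comp_def, InnerProductSpace.toDual_apply_apply, add_comm] using this

lemma slope_right_le {f : ℝ → ℝ} {D C : ℝ} (hD : HasDerivAt f D 0)
    (h : ∀ t : ℝ, t ∈ Set.Ioo (0:ℝ) 1 → (f t - f 0) / t ≤ C) : D ≤ C := by
  have hs := hasDerivAt_iff_tendsto_slope.mp hD
  have hsub : 𝓝[>] (0:ℝ) ≤ 𝓝[≠] (0:ℝ) :=
    nhdsWithin_mono _ (fun t ht => ne_of_gt ht)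
  refine le_of_tendsto (hs.mono_left hsub) ?_
  filter_upwards [Ioo_mem_nhdsGT_of_mem (by norm_num : (0:ℝ) ∈ Set.Ico (0:ℝ) 1)] with t ht
  simpa [slope_def_field, div_eq_inv_mul] using h t ht

lemma slope_right_ge {f : ℝ → ℝ} {D C : ℝ} (hD : HasDerivAt f D 0)
    (h : ∀ t : ℝ, t ∈ Set.Ioo (0:ℝ) 1 → C ≤ (f t - f 0) / t) : C ≤ D := by
  have hs := hasDerivAt_iff_tendsto_slope.mp hD
  have hsub : 𝓝[>] (0:ℝ) ≤ 𝓝[≠] (0:ℝ) :=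
    nhdsWithin_mono _ (fun t ht => ne_of_gt ht)
  refine ge_of_tendsto (hs.mono_left hsub) ?_
  filter_upwards [Ioo_mem_nhdsGT_of_mem (by norm_num : (0:ℝ) ∈ Set.Ico (0:ℝ) 1)] with t ht
  simpa [slope_def_field, div_eq_inv_mul] using h t ht

omit [CompleteSpace E] in
lemma seg_mem {X : Set E} (hX : Convex ℝ X) {x u : E} (hx : x ∈ X) (hu : u ∈ X)
    {t : ℝ} (ht : t ∈ Set.Ioo (0:ℝ) 1) : x + t • (u - x) ∈ X := by
  have := hX hx hu (by linarith [ht.2] : (0:ℝ) ≤ 1 - t) (le_of_lt ht.1) (by ring)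
  have he : (1 - t) • x + t • u = x + t • (u - x) := by
    rw [smul_sub, sub_smul, one_smul]; abel
  rwa [he] at this

/-- Convex differentiable function lies above its tangent. -/
lemma tangent_le {f : E → ℝ} (hconv : ConvexOn ℝ Set.univ f) {G x : E}
    (hG : HasGradientAt f G x) (y : E) : ⟪G, y - x⟫ ≤ f y - f x := by
  refine slope_right_le (line_hasDerivAt hG (y - x)) (fun t ht => ?_)
  have hcv := hconv.2 (Set.mem_univ x) (Set.mem_univ y)
      (by linarith [ht.2] : (0:ℝ) ≤ 1 - t) (le_of_lt ht.1) (by ring)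
  have he : (1 - t) • x + t • y = x + t • (y - x) := by
    rw [smul_sub, sub_smul, one_smul]; abel
  rw [he] at hcv
  rw [div_le_iff₀ ht.1]
  simp only [zero_smul, add_zero, smul_eq_mul] at hcv ⊢
  nlinarith [hcv]

/-- First-order optimality for a minimizer over a convex set. -/
lemma min_first_order {f : E → ℝ} {X : Set E} (hX : Convex ℝ X)
    {x u : E} (hx : x ∈ X) (hu : u ∈ X) (hmin : ∀ y ∈ X, f x ≤ f y)
    {D : ℝ} (hD : HasDerivAt (fun t : ℝ => f (x + t • (u - x))) D 0) : 0 ≤ D := by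
  refine slope_right_ge hD (fun t ht => ?_)
  have hmem := seg_mem hX hx hu ht
  have h1 := hmin _ hmem
  have h0 : x + (0:ℝ) • (u - x) = x := by simp
  apply div_nonneg _ (le_of_lt ht.1)
  simp only [h0]
  linarith [h1]

lemma inner_line_hasDerivAt (b x v p : E) :
    HasDerivAt (fun t : ℝ => ⟪b, x + t • v - p⟫) ⟪b, v⟫ 0 := by
  have he : (fun t : ℝ => ⟪b, x + t • v - p⟫) = fun t : ℝ => ⟪b, v⟫ * t + ⟪b, x - p⟫ := by
    funext t
    rw [show x + t • v - p = (x - p) + t • v by abel, inner_add_right, real_inner_smul_right]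
    ring
  rw [he]
  simpa using ((hasDerivAt_id (0:ℝ)).const_mul (⟪b, v⟫ : ℝ)).add_const (⟪b, x - p⟫ : ℝ)

lemma const_inner_line_hasDerivAt (c : ℝ) (a x v : E) :
    HasDerivAt (fun t : ℝ => c * ⟪a, x + t • v⟫) (c * ⟪a, v⟫) 0 := by
  have he : (fun t : ℝ => c * ⟪a, x + t • v⟫) = fun t : ℝ => (c * ⟪a, v⟫) * t + c * ⟪a, x⟫ := by
    funext t; rw [inner_add_right, real_inner_smul_right]; ring
  rw [he]
  simpa using ((hasDerivAt_id (0:ℝ)).const_mul (c * ⟪a, v⟫ : ℝ)).add_const (c * ⟪a, x⟫ : ℝ)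

/-- First-order optimality for the Bregman proximal subproblems. -/
lemma prox_first_order {X : Set E} (hX : Convex ℝ X) {d : E → ℝ} {Dd : E → E}
    (hd : ∀ x, HasGradientAt d (Dd x) x) (a p q : E) (c m : ℝ) {x u : E}
    (hx : x ∈ X) (hu : u ∈ X)
    (hmin : ∀ y ∈ X,
      c * ⟪a, x⟫ + (d x - d p - ⟪Dd p, x - p⟫) + m * (d x - d q - ⟪Dd q, x - q⟫) ≤
      c * ⟪a, y⟫ + (d y - d p - ⟪Dd p, y - p⟫) + m * (d y - d q - ⟪Dd q, y - q⟫)) :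
    0 ≤ c * ⟪a, u - x⟫ + ⟪Dd x - Dd p, u - x⟫ + m * ⟪Dd x - Dd q, u - x⟫ := by
  set v := u - x with hv
  have hB : HasDerivAt (fun t : ℝ => d (x + t • v) - d p - ⟪Dd p, x + t • v - p⟫)
      (⟪Dd x, v⟫ - ⟪Dd p, v⟫) 0 :=
    ((line_hasDerivAt (hd x) v).sub_const (d p)).sub (inner_line_hasDerivAt (Dd p) x v p)
  have hC : HasDerivAt (fun t : ℝ => m * (d (x + t • v) - d q - ⟪Dd q, x + t • v - q⟫))
      (m * (⟪Dd x, v⟫ - ⟪Dd q, v⟫)) 0 :=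
    (((line_hasDerivAt (hd x) v).sub_const (d q)).sub
      (inner_line_hasDerivAt (Dd q) x v q)).const_mul m
  have hDf : HasDerivAt (fun t : ℝ =>
      c * ⟪a, x + t • v⟫ + (d (x + t • v) - d p - ⟪Dd p, x + t • v - p⟫) +
        m * (d (x + t • v) - d q - ⟪Dd q, x + t • v - q⟫))
      (c * ⟪a, v⟫ + (⟪Dd x, v⟫ - ⟪Dd p, v⟫) + m * (⟪Dd x, v⟫ - ⟪Dd q, v⟫)) 0 :=
    ((const_inner_line_hasDerivAt c a x v).add hB).add hC
  have h0 := min_first_order (f := fun y =>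
      c * ⟪a, y⟫ + (d y - d p - ⟪Dd p, y - p⟫) + m * (d y - d q - ⟪Dd q, y - q⟫))
    hX hx hu hmin hDf
  simpa [inner_sub_left] using h0

end helpers

lemma clear_div1 {C A B : ℝ} (hC : 0 < C) (h : 0 ≤ 1/C * A + B) : 0 ≤ A + C * B := by
  have hC0 : C ≠ 0 := ne_of_gt hC
  have h2 := mul_le_mul_of_nonneg_left h hC.le
  have he : C * (1/C * A + B) = A + C * B := by field_simp
  rw [mul_zero, he] at h2
  exact h2

lemma clear_div2 {C A B m T : ℝ} (hC : 0 < C) (h : 0 ≤ 1/C * A + B + m/C * T) :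
    0 ≤ A + C * B + m * T := by
  have hC0 : C ≠ 0 := ne_of_gt hC
  have h2 := mul_le_mul_of_nonneg_left h hC.le
  have he : C * (1/C * A + B + m/C * T) = A + C * B + m * T := by field_simp
  rw [mul_zero, he] at h2
  exact h2

open Finset

set_option maxHeartbeats 2000000 in
theorem algorithm4_iteration_complexity
    {E : Type*} [NormedAddCommGroup E] [InnerProductSpace ℝ E] [CompleteSpace E]
    (X : Set E) (hXne : X.Nonempty) (hXconv : Convex ℝ X)
    (d : E → ℝ) (hdconv : ConvexOn ℝ Set.univ d)
    (Dd : E → E) (hd : ∀ x, HasGradientAt d (Dd x) x)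
    (V : E → E → ℝ) (hV : ∀ y x, V y x = d y - d x - ⟪Dd x, y - x⟫)
    (μ Lb : ℝ) (hμ : 0 < μ) (hLb : 0 < Lb) (g : E → E)
    (hmono : ∀ x ∈ X, ∀ y ∈ X, μ * (V y x + V x y) ≤ ⟪g y - g x, y - x⟫)
    (zs : E) (hzs : zs ∈ X) (hMinty : ∀ x ∈ X, ⟪g x, zs - x⟫ ≤ 0)
    (z w : ℕ → E) (hzX : ∀ k, z k ∈ X) (hwX : ∀ k, w k ∈ X)
    (L : ℕ → ℝ) (hL : ∀ i ≥ 1, 0 < L i) (hLle : ∀ i ≥ 1, L i ≤ 2 * Lb)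
    (hwmin : ∀ k : ℕ, ∀ y ∈ X,
      (1 / L (k + 1)) * ⟪g (z k), w k⟫ + V (w k) (z k) ≤
        (1 / L (k + 1)) * ⟪g (z k), y⟫ + V y (z k))
    (hzmin : ∀ k : ℕ, ∀ u ∈ X,
      (1 / L (k + 1)) * ⟪g (w k), z (k + 1)⟫ + V (z (k + 1)) (z k) +
          (μ / L (k + 1)) * V (z (k + 1)) (w k) ≤
        (1 / L (k + 1)) * ⟪g (w k), u⟫ + V u (z k) + (μ / L (k + 1)) * V u (w k))
    (hls : ∀ k : ℕ, ⟪g (z k) - g (w k), z (k + 1) - w k⟫ ≤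
      L (k + 1) * (V (w k) (z k) + V (z (k + 1)) (w k))) :
    ∀ R₀ > (0 : ℝ), V zs (z 0) ≤ R₀ ^ 2 →
      ∀ ε : ℝ, 0 < ε → ε < R₀ ^ 2 →
        ∀ N : ℕ, (2 * Lb + μ) / μ * Real.logb 2 (R₀ ^ 2 / ε) ≤ (N : ℝ) →
          V zs (z N) ≤ ε := by
  intro R₀ hR₀ hV0 ε hε hεR N hN
  set q : ℝ := 2 * Lb / (2 * Lb + μ) with hqdef
  have hden : 0 < 2 * Lb + μ := by linarith
  have hq0 : 0 < q := by positivity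
  have hVnn : ∀ u x : E, 0 ≤ V u x := by
    intro u x
    rw [hV]
    linarith [tangent_le hdconv (hd x) u]
  have three : ∀ u a b : E, ⟪Dd a - Dd b, u - a⟫ = V u b - V u a - V a b := by
    intro u a b
    simp only [hV, inner_sub_left, inner_sub_right]
    ring
  -- Minty solution + relative strong monotonicity bound
  have key : ∀ y ∈ X, μ * V zs y ≤ ⟪g y, y - zs⟫ := by
    intro y hy
    have hF : ∀ t ∈ Set.Ioo (0:ℝ) 1,
        0 ≤ (1 - t) * ⟪g y, y - zs⟫ - μ * V (zs + t • (y - zs)) y := by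
      intro t ht
      set xt := zs + t • (y - zs) with hxt
      have hxtX : xt ∈ X := seg_mem hXconv hzs hy ht
      have hm := hmono xt hxtX y hy
      have hmin := hMinty xt hxtX
      have e1 : y - xt = (1 - t) • (y - zs) := by
        rw [hxt, sub_smul, one_smul]; abel
      have e2 : zs - xt = -(t • (y - zs)) := by rw [hxt]; abel
      rw [e1, real_inner_smul_right, inner_sub_left] at hm
      rw [e2, inner_neg_right, real_inner_smul_right] at hmin
      have h3 : 0 ≤ ⟪g xt, y - zs⟫ := by nlinarith [ht.1]
      nlinarith [hm, hVnn y xt, ht.2,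
        mul_nonneg (by linarith [ht.2] : (0:ℝ) ≤ 1 - t) h3]
    have hcont : ContinuousAt (fun t : ℝ =>
        (1 - t) * ⟪g y, y - zs⟫ - μ * V (zs + t • (y - zs)) y) 0 := by
      simp only [hV]
      have hdc : ContinuousAt (fun t : ℝ => d (zs + t • (y - zs))) 0 :=
        (line_hasDerivAt (hd zs) (y - zs)).continuousAt
      have hic : Continuous (fun t : ℝ => ⟪Dd y, zs + t • (y - zs) - y⟫) :=
        Continuous.inner continuous_const
          ((continuous_const.add (continuous_id.smul continuous_const)).sub continuous_const)
      exact ((continuousAt_const.sub continuousAt_id).mul continuousAt_const).sub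
        (continuousAt_const.mul ((hdc.sub continuousAt_const).sub hic.continuousAt))
    have hlim := hcont.tendsto.mono_left (nhdsWithin_le_nhds (s := Set.Ioi (0:ℝ)))
    have h0 : 0 ≤ (1 - (0:ℝ)) * ⟪g y, y - zs⟫ - μ * V (zs + (0:ℝ) • (y - zs)) y := by
      refine ge_of_tendsto hlim ?_
      filter_upwards [Ioo_mem_nhdsGT_of_mem (by norm_num : (0:ℝ) ∈ Set.Ico (0:ℝ) 1)] with t ht
      exact hF t ht
    simp only [zero_smul, add_zero, sub_zero, one_mul] at h0
    linarith
  -- one-step contraction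
  have step : ∀ k : ℕ, V zs (z (k + 1)) ≤ q * V zs (z k) := by
    intro k
    set L1 := L (k + 1) with hL1def
    have hL1 : 0 < L1 := hL (k+1) (by omega)
    have hL1le : L1 ≤ 2 * Lb := hLle (k+1) (by omega)
    have hmin1 : ∀ y ∈ X,
        1/L1 * ⟪g (z k), w k⟫ + (d (w k) - d (z k) - ⟪Dd (z k), w k - z k⟫) +
          0 * (d (w k) - d (z k) - ⟪Dd (z k), w k - z k⟫) ≤
        1/L1 * ⟪g (z k), y⟫ + (d y - d (z k) - ⟪Dd (z k), y - z k⟫) +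
          0 * (d y - d (z k) - ⟪Dd (z k), y - z k⟫) := by
      intro y hy
      have h := hwmin k y hy
      rw [hV (w k) (z k), hV y (z k)] at h
      simpa using h
    have FO1 := prox_first_order hXconv hd (g (z k)) (z k) (z k) (1/L1) 0
      (hwX k) (hzX (k+1)) hmin1
    have hmin2 : ∀ u ∈ X,
        1/L1 * ⟪g (w k), z (k+1)⟫ + (d (z (k+1)) - d (z k) - ⟪Dd (z k), z (k+1) - z k⟫) +
          μ/L1 * (d (z (k+1)) - d (w k) - ⟪Dd (w k), z (k+1) - w k⟫) ≤
        1/L1 * ⟪g (w k), u⟫ + (d u - d (z k) - ⟪Dd (z k), u - z k⟫) +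
          μ/L1 * (d u - d (w k) - ⟪Dd (w k), u - w k⟫) := by
      intro u hu
      have h := hzmin k u hu
      simp only [hV] at h
      linarith
    have FO2 := prox_first_order hXconv hd (g (w k)) (z k) (w k) (1/L1) (μ/L1)
      (hzX (k+1)) hzs hmin2
    simp only [zero_mul, add_zero] at FO1
    simp only [three] at FO1 FO2
    have hls' := hls k
    have hkey := key (w k) (hwX k)
    have hid : ⟪g (w k), w k - zs⟫ =
        ⟪g (z k) - g (w k), z (k+1) - w k⟫ - ⟪g (z k), z (k+1) - w k⟫ -
          ⟪g (w k), zs - z (k+1)⟫ := by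
      simp only [inner_sub_left, inner_sub_right]
      ring
    have FO1m := clear_div1 hL1 FO1
    have FO2m := clear_div2 hL1 FO2
    have hmain : (L1 + μ) * V zs (z (k+1)) ≤ L1 * V zs (z k) := by
      nlinarith [FO1m, FO2m, hls', hkey, hid, hVnn (z (k+1)) (w k)]
    rw [hqdef, div_mul_eq_mul_div, le_div_iff₀ hden]
    nlinarith [hmain, hVnn zs (z (k+1)), hVnn zs (z k), hL1,
      mul_le_mul_of_nonneg_left hmain (by linarith : (0:ℝ) ≤ 2*Lb),
      mul_nonneg (mul_nonneg hμ.le (by linarith : (0:ℝ) ≤ 2*Lb - L1)) (hVnn zs (z (k+1)))]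
  -- iterate the contraction
  have hiter : ∀ n : ℕ, V zs (z n) ≤ q ^ n * R₀ ^ 2 := by
    intro n
    induction n with
    | zero => simpa using hV0
    | succ n ih =>
      calc V zs (z (n+1)) ≤ q * V zs (z n) := step n
        _ ≤ q * (q ^ n * R₀ ^ 2) := mul_le_mul_of_nonneg_left ih hq0.le
        _ = q ^ (n+1) * R₀ ^ 2 := by ring
  -- numerics
  have hx1 : 1 < R₀ ^ 2 / ε := (one_lt_div hε).mpr hεR
  have hlogx : 0 < Real.log (R₀ ^ 2 / ε) := Real.log_pos hx1
  have hlog2 : 0 < Real.log 2 := Real.log_pos one_lt_two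
  have hlb : Real.log (R₀ ^ 2 / ε) ≤ Real.logb 2 (R₀ ^ 2 / ε) := by
    rw [Real.logb, le_div_iff₀ hlog2]
    nlinarith [Real.log_two_lt_d9, hlogx]
  have hN' : Real.log (R₀ ^ 2 / ε) ≤ (N:ℝ) * μ / (2 * Lb + μ) := by
    have hc : (0:ℝ) < μ / (2 * Lb + μ) := by positivity
    have h2 := mul_le_mul_of_nonneg_left hN hc.le
    have he : μ / (2*Lb+μ) * ((2*Lb+μ)/μ * Real.logb 2 (R₀^2/ε)) =
        Real.logb 2 (R₀^2/ε) := by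
      field_simp
    rw [he] at h2
    have : μ / (2*Lb+μ) * (N:ℝ) = (N:ℝ) * μ / (2*Lb+μ) := by ring
    linarith [hlb]
  have hlogq : Real.log q ≤ -(μ / (2*Lb+μ)) := by
    have h1 := Real.log_le_sub_one_of_pos hq0
    have h2 : q - 1 = -(μ/(2*Lb+μ)) := by
      rw [hqdef]
      field_simp
      ring
    linarith
  have hqN : q ^ N ≤ ε / R₀ ^ 2 := by
    have h1 : Real.log (q ^ N) ≤ Real.log (ε / R₀ ^ 2) := by
      rw [Real.log_pow, Real.log_div (ne_of_gt hε) (by positivity)]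
      have h2 : (N:ℝ) * Real.log q ≤ (N:ℝ) * (-(μ/(2*Lb+μ))) :=
        mul_le_mul_of_nonneg_left hlogq (Nat.cast_nonneg N)
      have h3 : Real.log (R₀^2/ε) = Real.log (R₀^2) - Real.log ε :=
        Real.log_div (by positivity) (ne_of_gt hε)
      have h4 : (N:ℝ) * (μ/(2*Lb+μ)) = (N:ℝ) * μ / (2*Lb+μ) := by ring
      linarith [hN']
    calc q ^ N = Real.exp (Real.log (q ^ N)) := (Real.exp_log (by positivity)).symm
      _ ≤ Real.exp (Real.log (ε / R₀ ^ 2)) := Real.exp_le_exp.mpr h1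
      _ = ε / R₀ ^ 2 := Real.exp_log (by positivity)
  have hfin : q ^ N * R₀ ^ 2 ≤ ε := by
    have := mul_le_mul_of_nonneg_right hqN (by positivity : (0:ℝ) ≤ R₀ ^ 2)
    have he : ε / R₀ ^ 2 * R₀ ^ 2 = ε := by field_simp
    linarith [this, he.le]
  linarith [hiter N, hfin]
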